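/- For every positive integer n, writing n′ := rad(n), m := φ(n), m′ := φ(n′), and h := n/n′, the characteristic polynomials satisfy det(G_n − x·Id_m) = h^m · det(G_{n′} − (x/h)·Id_{m′})^h as polynomials in x. -/

import Mathlib

open Matrix Polynomial BigOperators

/-- The Frobenius norm of a square complex matrix. -/
noncomputable def frobNorm {k : ℕ} (A : Matrix (Fin k) (Fin k) ℂ) : ℝ :=
  Real.sqrt (∑ i, ∑ j, ‖A i j‖ ^ 2)

/-- The condition number `Cond(A) = ‖A‖ ‖A⁻¹‖` (Frobenius norm). -/
noncomputable def condNum {k : ℕ} (A : Matrix (Fin k) (Fin k) ℂ) : ℝ :=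
  frobNorm A * frobNorm A⁻¹

/-- The Vandermonde matrix with (i,j) entry `ζ i ^ j` (0-indexed). -/
def vand {m : ℕ} (ζ : Fin m → ℂ) : Matrix (Fin m) (Fin m) ℂ :=
  Matrix.of fun i j => ζ i ^ (j : ℕ)

/-- The radical of `n`: the product of the distinct prime factors of `n`. -/
def rad (n : ℕ) : ℕ := ∏ p ∈ n.primeFactors, p

/-- The Ramanujan sum `c_n(t)`: the sum of the `t`-th powers of the
primitive `n`-th roots of unity in `ℂ`. -/
noncomputable def ram (n : ℕ) (t : ℤ) : ℂ := ∑ z ∈ primitiveRoots n ℂ, z ^ t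

lemma rad_dvd (n : ℕ) : rad n ∣ n := Nat.prod_primeFactors_dvd n
lemma rad_pos (n : ℕ) (hn : 0 < n) : 0 < rad n :=
  Finset.prod_pos fun _ hp => (Nat.prime_of_mem_primeFactors hp).pos
lemma primeFactors_rad (n : ℕ) : (rad n).primeFactors = n.primeFactors :=
  Nat.primeFactors_prod fun _ hp => Nat.prime_of_mem_primeFactors hp
instance {n : ℕ} [NeZero n] : NeZero (rad n) :=
  ⟨(rad_pos n (Nat.pos_of_ne_zero (NeZero.ne n))).ne'⟩
lemma totient_rad (n : ℕ) (hn : 0 < n) : n.totient = (rad n).totient * (n / rad n) := by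
  have h1 := Nat.totient_eq_div_primeFactors_mul n
  have h2 := Nat.totient_eq_div_primeFactors_mul (rad n)
  rw [show (∏ p ∈ n.primeFactors, p) = rad n from rfl] at h1
  rw [primeFactors_rad, show (∏ p ∈ n.primeFactors, p) = rad n from rfl,
    Nat.div_self (rad_pos n hn), one_mul] at h2
  rw [h1, h2, mul_comm]

lemma coprime_lift {n x : ℕ} (h : ∀ p : ℕ, p.Prime → p ∣ n → ¬ p ∣ x) :
    Nat.Coprime x n := by
  by_contra hc
  obtain ⟨p, hp, hpd⟩ := Nat.exists_prime_and_dvd hc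
  exact h p hp (hpd.trans (Nat.gcd_dvd_right x n)) (hpd.trans (Nat.gcd_dvd_left x n))


lemma sum_enum_eq_ram {m k : ℕ} (hk : 0 < k) (hm : m = k.totient) (ζ : Fin m → ℂ)
    (hinj : Function.Injective ζ) (hζ : ∀ i, IsPrimitiveRoot (ζ i) k) (t : ℤ) :
    ∑ i, ζ i ^ t = ram k t := by
  have himg : Finset.univ.image ζ = primitiveRoots k ℂ := by
    apply Finset.eq_of_subset_of_card_le
    · intro z hz
      obtain ⟨i, _, rfl⟩ := Finset.mem_image.1 hz
      exact (mem_primitiveRoots hk).2 (hζ i)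
    · rw [Finset.card_image_of_injective _ hinj, Finset.card_univ, Fintype.card_fin,
        Complex.card_primitiveRoots, hm]
  rw [ram, ← himg, Finset.sum_image (fun a _ b _ hab => hinj hab)]

lemma ram_eq_units_sum (k : ℕ) [NeZero k] (hk : 0 < k) {μ : ℂ} (hμ : IsPrimitiveRoot μ k) (t : ℤ) :
    ram k t = ∑ a : (ZMod k)ˣ, μ ^ ((((a : ZMod k).val : ℤ)) * t) := by
  have himg : Finset.univ.image (fun a : (ZMod k)ˣ => μ ^ (a : ZMod k).val)
      = primitiveRoots k ℂ := by
    apply Finset.eq_of_subset_of_card_le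
    · intro z hz
      obtain ⟨a, _, rfl⟩ := Finset.mem_image.1 hz
      exact (mem_primitiveRoots hk).2 (hμ.pow_of_coprime _ (ZMod.val_coe_unit_coprime a))
    · have hinj : Function.Injective (fun a : (ZMod k)ˣ => μ ^ (a : ZMod k).val) := by
        intro a b hab
        exact Units.ext (ZMod.val_injective k (hμ.pow_inj (ZMod.val_lt _) (ZMod.val_lt _) hab))
      rw [Finset.card_image_of_injective _ hinj, Finset.card_univ,
        Complex.card_primitiveRoots, ZMod.card_units_eq_totient]
  have hinj : Function.Injective (fun a : (ZMod k)ˣ => μ ^ (a : ZMod k).val) := by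
    intro a b hab
    exact Units.ext (ZMod.val_injective k (hμ.pow_inj (ZMod.val_lt _) (ZMod.val_lt _) hab))
  rw [ram, ← himg, Finset.sum_image (fun a _ b _ hab => hinj hab)]
  refine Finset.sum_congr rfl fun a _ => ?_
  rw [← zpow_natCast μ, ← _root_.zpow_mul]

lemma gram_apply {m k : ℕ} (hk : 0 < k) (hm : m = k.totient) (ζ : Fin m → ℂ)
    (hinj : Function.Injective ζ) (hζ : ∀ i, IsPrimitiveRoot (ζ i) k) (j j' : Fin m) :
    ((vand ζ)ᴴ * vand ζ) j j' = ram k (((j' : ℕ) : ℤ) - ((j : ℕ) : ℤ)) := by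
  rw [Matrix.mul_apply, ← sum_enum_eq_ram hk hm ζ hinj hζ]
  refine Finset.sum_congr rfl fun i _ => ?_
  have hne : ζ i ≠ 0 := (hζ i).ne_zero hk.ne'
  have hstar : star (ζ i) = (ζ i)⁻¹ := by
    rw [Complex.star_def,
      ← Complex.inv_eq_conj (Complex.norm_eq_one_of_pow_eq_one (hζ i).pow_eq_one hk.ne')]
  rw [Matrix.conjTranspose_apply]
  show star (ζ i ^ ((j : ℕ))) * ζ i ^ ((j' : ℕ)) = _
  rw [star_pow, hstar, zpow_sub₀ hne, zpow_natCast, zpow_natCast, div_eq_mul_inv, inv_pow,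
    mul_comm]

lemma ram_decomp (n : ℕ) [NeZero n] (hn : 0 < n) {μ : ℂ} (hμ : IsPrimitiveRoot μ n) (t : ℤ) :
    ram n t = (∑ b : (ZMod (rad n))ˣ, μ ^ ((((b : ZMod (rad n)).val : ℤ)) * t)) *
      ∑ s ∈ Finset.range (n / rad n), (μ ^ (((rad n : ℕ) : ℤ) * t)) ^ s := by
  set n' := rad n with hn'
  set h := n / n' with hh
  have hn'pos : 0 < n' := rad_pos n hn
  have hmul : n' * h = n := Nat.mul_div_cancel' (rad_dvd n)
  have hhpos : 0 < h := Nat.div_pos (Nat.le_of_dvd hn (rad_dvd n)) hn'pos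
  have hμ0 : μ ≠ 0 := hμ.ne_zero hn.ne'
  have cop : ∀ (b : (ZMod n')ˣ) (s : Fin h), Nat.Coprime ((b : ZMod n').val + n' * (s : ℕ)) n := by
    intro b s
    apply coprime_lift
    intro p hp hpn hpx
    have hpn' : p ∣ n' := Nat.dvd_of_mem_primeFactors (by
      rw [hn', primeFactors_rad]; exact Nat.mem_primeFactors.2 ⟨hp, hpn, hn.ne'⟩)
    have hbv : p ∣ (b : ZMod n').val := (Nat.dvd_add_right (Dvd.dvd.mul_right hpn' _)).1
      (by rwa [Nat.add_comm] at hpx)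
    have h1 : p ∣ 1 := (ZMod.val_coe_unit_coprime b) ▸ Nat.dvd_gcd hbv hpn'
    exact hp.one_lt.ne' (Nat.dvd_one.1 h1)
  -- the parametrizing map
  set g : (ZMod n')ˣ × Fin h → (ZMod n)ˣ :=
    fun p => ZMod.unitOfCoprime _ (cop p.1 p.2) with hg
  have hval : ∀ p : (ZMod n')ˣ × Fin h,
      ((g p : ZMod n)).val = (p.1 : ZMod n').val + n' * (p.2 : ℕ) := by
    rintro ⟨b, s⟩
    have hlt : (b : ZMod n').val + n' * (s : ℕ) < n := by
      calc (b : ZMod n').val + n' * (s : ℕ) < n' + n' * (s : ℕ) :=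
            Nat.add_lt_add_right (ZMod.val_lt _) _
        _ = n' * ((s : ℕ) + 1) := by ring
        _ ≤ n' * h := Nat.mul_le_mul_left _ s.2
        _ = n := hmul
    show ((ZMod.unitOfCoprime _ (cop b s) : ZMod n)).val = _
    rw [ZMod.coe_unitOfCoprime, ZMod.val_cast_of_lt hlt]
  have hginj : Function.Injective g := by
    rintro ⟨b, s⟩ ⟨b', s'⟩ hbs
    have hv : (b : ZMod n').val + n' * (s : ℕ) = (b' : ZMod n').val + n' * (s' : ℕ) := by
      rw [← hval ⟨b, s⟩, ← hval ⟨b', s'⟩, hbs]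
    have hb : (b : ZMod n').val = (b' : ZMod n').val := by
      have := congrArg (· % n') hv
      simpa [Nat.add_mul_mod_self_left, Nat.mod_eq_of_lt (ZMod.val_lt _)] using this
    have hbe : b = b' := Units.ext (ZMod.val_injective n' hb)
    have hs : (s : ℕ) = (s' : ℕ) := by
      rw [hb] at hv
      exact Nat.eq_of_mul_eq_mul_left hn'pos (Nat.add_left_cancel hv)
    exact Prod.ext hbe (Fin.ext hs)
  have hgbij : Function.Bijective g := by
    rw [Fintype.bijective_iff_injective_and_card]
    refine ⟨hginj, ?_⟩
    rw [Fintype.card_prod, ZMod.card_units_eq_totient, ZMod.card_units_eq_totient,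
      Fintype.card_fin]
    exact (totient_rad n hn).symm
  rw [ram_eq_units_sum n hn hμ t,
    ← Fintype.sum_bijective g hgbij _ _ (fun p => rfl)]
  rw [Fintype.sum_prod_type]
  rw [Finset.sum_mul_sum]
  refine Finset.sum_congr rfl fun b _ => ?_
  rw [← Fin.sum_univ_eq_sum_range]
  refine Finset.sum_congr rfl fun s _ => ?_
  rw [hval ⟨b, s⟩, ← zpow_natCast (μ ^ (((n' : ℕ) : ℤ) * t)) (s : ℕ), ← _root_.zpow_mul,
    ← zpow_add₀ hμ0]
  congr 1
  push_cast
  ring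

lemma ram_eq_zero (n : ℕ) [NeZero n] (hn : 0 < n) {t : ℤ}
    (ht : ¬ ((n / rad n : ℕ) : ℤ) ∣ t) : ram n t = 0 := by
  obtain ⟨μ, hμ⟩ : ∃ μ : ℂ, IsPrimitiveRoot μ n := ⟨_, Complex.isPrimitiveRoot_exp n hn.ne'⟩
  have hmul : rad n * (n / rad n) = n := Nat.mul_div_cancel' (rad_dvd n)
  have hω : IsPrimitiveRoot (μ ^ (rad n)) (n / rad n) := hμ.pow hn hmul.symm
  rw [ram_decomp n hn hμ t]
  have h1 : μ ^ (((rad n : ℕ) : ℤ) * t) = (μ ^ (rad n)) ^ t := by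
    rw [_root_.zpow_mul, zpow_natCast]
  have hne : (μ ^ (rad n)) ^ t ≠ 1 := fun h1' => ht ((hω.zpow_eq_one_iff_dvd t).1 h1')
  rw [h1, geom_sum_eq hne]
  have : ((μ ^ (rad n)) ^ t) ^ (n / rad n) = 1 := by
    rw [← zpow_natCast ((μ ^ (rad n)) ^ t), ← _root_.zpow_mul, mul_comm, _root_.zpow_mul,
      zpow_natCast, hω.pow_eq_one, _root_.one_zpow]
  rw [this, sub_self, zero_div, mul_zero]

lemma ram_h_mul (n : ℕ) [NeZero n] (hn : 0 < n) (s : ℤ) :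
    ram n (((n / rad n : ℕ) : ℤ) * s) = ((n / rad n : ℕ) : ℂ) * ram (rad n) s := by
  obtain ⟨μ, hμ⟩ : ∃ μ : ℂ, IsPrimitiveRoot μ n := ⟨_, Complex.isPrimitiveRoot_exp n hn.ne'⟩
  have hn'pos : 0 < rad n := rad_pos n hn
  have hmul : rad n * (n / rad n) = n := Nat.mul_div_cancel' (rad_dvd n)
  have hmul' : (n / rad n) * rad n = n := by rw [mul_comm]; exact hmul
  have hw : IsPrimitiveRoot (μ ^ (n / rad n)) (rad n) := hμ.pow hn hmul'.symm
  rw [ram_decomp n hn hμ _]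
  have h2 : ∀ s' ∈ Finset.range (n / rad n),
      (μ ^ (((rad n : ℕ) : ℤ) * ((((n / rad n : ℕ) : ℤ)) * s))) ^ s' = 1 := by
    intro s' _
    have : μ ^ (((rad n : ℕ) : ℤ) * ((((n / rad n : ℕ) : ℤ)) * s)) = 1 := by
      rw [← mul_assoc, show ((rad n : ℕ) : ℤ) * ((n / rad n : ℕ) : ℤ) = ((n : ℕ) : ℤ) from
        mod_cast congrArg (Nat.cast (R := ℤ)) hmul, _root_.zpow_mul, zpow_natCast,
        hμ.pow_eq_one, _root_.one_zpow]
    rw [this, one_pow]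
  rw [Finset.sum_congr rfl h2, Finset.sum_const, Finset.card_range, nsmul_eq_mul, mul_one]
  rw [ram_eq_units_sum (rad n) hn'pos hw s]
  rw [mul_comm]
  congr 1
  refine Finset.sum_congr rfl fun b _ => ?_
  rw [← zpow_natCast μ (n / rad n), ← _root_.zpow_mul]
  congr 1
  ring

/-- For every positive integer `n`, with `n' = rad n`, `m = φ(n)`,
`m' = φ(n')` and `h = n / n'`, one has
`det(G_n - x • Id) = h ^ m * det(G_{n'} - (x/h) • Id) ^ h` as polynomials in `x`. -/
theorem charpoly_gram_eq_pow_charpoly_gram_rad (n : ℕ) (hn : 0 < n)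
    (ζ : Fin n.totient → ℂ) (hζinj : Function.Injective ζ)
    (hζ : ∀ i, IsPrimitiveRoot (ζ i) n)
    (ξ : Fin (rad n).totient → ℂ) (hξinj : Function.Injective ξ)
    (hξ : ∀ i, IsPrimitiveRoot (ξ i) (rad n)) :
    Matrix.det (((vand ζ)ᴴ * vand ζ).map Polynomial.C -
        (Polynomial.X : Polynomial ℂ) • (1 : Matrix (Fin n.totient) (Fin n.totient) (Polynomial ℂ)))
      = Polynomial.C (((n / rad n : ℕ) : ℂ)) ^ n.totient *
        Matrix.det (((vand ξ)ᴴ * vand ξ).map Polynomial.C -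
          (Polynomial.C (((n / rad n : ℕ) : ℂ))⁻¹ * Polynomial.X) •
            (1 : Matrix (Fin (rad n).totient) (Fin (rad n).totient) (Polynomial ℂ))) ^ (n / rad n) := by
  haveI : NeZero n := ⟨hn.ne'⟩
  have hn'pos : 0 < rad n := rad_pos n hn
  have hhpos : 0 < n / rad n := Nat.div_pos (Nat.le_of_dvd hn (rad_dvd n)) hn'pos
  have hm : n.totient = (rad n).totient * (n / rad n) := totient_rad n hn
  have hch0 : ((n / rad n : ℕ) : ℂ) ≠ 0 := Nat.cast_ne_zero.2 hhpos.ne'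
  let e : Fin (rad n).totient × Fin (n / rad n) ≃ Fin n.totient :=
    finProdFinEquiv.trans (finCongr hm.symm)
  have heval : ∀ p : Fin (rad n).totient × Fin (n / rad n),
      ((e p : Fin n.totient) : ℕ) = (p.2 : ℕ) + (n / rad n) * (p.1 : ℕ) := by
    rintro ⟨q, r⟩; simp [e, finProdFinEquiv]
  have hGblock : ((vand ζ)ᴴ * vand ζ).submatrix e e
      = Matrix.blockDiagonal (fun _ : Fin (n / rad n) =>
          ((n / rad n : ℕ) : ℂ) • ((vand ξ)ᴴ * vand ξ)) := by
    ext ⟨q, r⟩ ⟨q', r'⟩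
    rw [Matrix.submatrix_apply, Matrix.blockDiagonal_apply,
      gram_apply hn rfl ζ hζinj hζ, heval ⟨q, r⟩, heval ⟨q', r'⟩]
    by_cases hr : r = r'
    · subst hr
      simp only [if_pos rfl]
      have harg : (((r : ℕ) + (n / rad n) * (q' : ℕ) : ℕ) : ℤ)
            - (((r : ℕ) + (n / rad n) * (q : ℕ) : ℕ) : ℤ)
          = ((n / rad n : ℕ) : ℤ) * (((q' : ℕ) : ℤ) - ((q : ℕ) : ℤ)) := by push_cast; ring
      rw [harg, ram_h_mul n hn, Matrix.smul_apply,
        gram_apply hn'pos rfl ξ hξinj hξ, smul_eq_mul]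
      simp
    · rw [if_neg hr]
      apply ram_eq_zero n hn
      intro hdvd
      have h2 : ((n / rad n : ℕ) : ℤ) ∣ ((n / rad n : ℕ) : ℤ) * (((q' : ℕ) : ℤ) - ((q : ℕ) : ℤ)) :=
        Dvd.intro _ rfl
      have h3 := dvd_sub hdvd h2
      have harg : ((((r' : ℕ) + (n / rad n) * (q' : ℕ) : ℕ) : ℤ)
            - (((r : ℕ) + (n / rad n) * (q : ℕ) : ℕ) : ℤ))
          - ((n / rad n : ℕ) : ℤ) * (((q' : ℕ) : ℤ) - ((q : ℕ) : ℤ))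
          = ((r' : ℕ) : ℤ) - ((r : ℕ) : ℤ) := by push_cast; ring
      rw [harg] at h3
      have hne : (((r' : ℕ) : ℤ) - ((r : ℕ) : ℤ)) ≠ 0 := by
        intro h0
        exact hr (Fin.ext (by omega)).symm
      have hlt : (((r' : ℕ) : ℤ) - ((r : ℕ) : ℤ)).natAbs < ((n / rad n : ℕ) : ℤ).natAbs := by
        have := r.2; have := r'.2; omega
      exact hne (Int.eq_zero_of_dvd_of_natAbs_lt_natAbs h3 hlt)
  rw [← Matrix.det_submatrix_equiv_self e]
  have hsub : ((((vand ζ)ᴴ * vand ζ).map Polynomial.C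
        - (Polynomial.X : Polynomial ℂ) • 1)).submatrix e e
      = (((vand ζ)ᴴ * vand ζ).submatrix e e).map Polynomial.C
        - (Polynomial.X : Polynomial ℂ) • 1 := by
    ext p q : 2
    simp only [Matrix.submatrix_apply, Matrix.sub_apply, Matrix.map_apply, Matrix.smul_apply,
      Matrix.one_apply, smul_eq_mul, e.injective.eq_iff]
  rw [hsub, hGblock]
  have hmap : (Matrix.blockDiagonal fun _ : Fin (n / rad n) =>
        ((n / rad n : ℕ) : ℂ) • ((vand ξ)ᴴ * vand ξ)).map Polynomial.C
      = Matrix.blockDiagonal fun _ : Fin (n / rad n) =>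
          Polynomial.C ((n / rad n : ℕ) : ℂ) • ((vand ξ)ᴴ * vand ξ).map Polynomial.C := by
    ext ⟨q, r⟩ ⟨q', r'⟩ : 2
    simp only [Matrix.map_apply, Matrix.blockDiagonal_apply, apply_ite Polynomial.C,
      Matrix.smul_apply, smul_eq_mul, _root_.map_mul, map_zero]
  have hone : (Polynomial.X : Polynomial ℂ) • (1 : Matrix
        (Fin (rad n).totient × Fin (n / rad n)) (Fin (rad n).totient × Fin (n / rad n))
        (Polynomial ℂ))
      = Matrix.blockDiagonal fun _ : Fin (n / rad n) =>
          (Polynomial.X : Polynomial ℂ) • 1 := by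
    have hfun : (fun _ : Fin (n / rad n) => (Polynomial.X : Polynomial ℂ) •
        (1 : Matrix (Fin (rad n).totient) (Fin (rad n).totient) (Polynomial ℂ)))
        = (Polynomial.X : Polynomial ℂ) • (fun _ : Fin (n / rad n) =>
          (1 : Matrix (Fin (rad n).totient) (Fin (rad n).totient) (Polynomial ℂ))) := rfl
    have hfun2 : (fun _ : Fin (n / rad n) =>
        (1 : Matrix (Fin (rad n).totient) (Fin (rad n).totient) (Polynomial ℂ)))
        = (1 : Fin (n / rad n) →
          Matrix (Fin (rad n).totient) (Fin (rad n).totient) (Polynomial ℂ)) := rfl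
    rw [hfun, hfun2, Matrix.blockDiagonal_smul, Matrix.blockDiagonal_one]
  rw [hmap, hone, ← Matrix.blockDiagonal_sub, Matrix.det_blockDiagonal]
  simp only [Pi.sub_apply]
  rw [Finset.prod_const, Finset.card_univ, Fintype.card_fin]
  have hblock : Polynomial.C ((n / rad n : ℕ) : ℂ) • ((vand ξ)ᴴ * vand ξ).map Polynomial.C
        - (Polynomial.X : Polynomial ℂ) • 1
      = Polynomial.C ((n / rad n : ℕ) : ℂ) • (((vand ξ)ᴴ * vand ξ).map Polynomial.C -
          (Polynomial.C (((n / rad n : ℕ) : ℂ))⁻¹ * Polynomial.X) • 1) := by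
    rw [smul_sub, smul_smul, ← mul_assoc, ← _root_.map_mul, mul_inv_cancel₀ hch0, _root_.map_one, one_mul]
  rw [hblock, Matrix.det_smul, Fintype.card_fin, mul_pow, ← pow_mul, ← hm]
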